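/- Let Y_1, …, Y_N be independent Bernoulli random variables with P(Y_i = 1) = q_i, and let w_1, …, w_N > 0 be weights. Let Y_{11}, Y_{12} be Bernoulli random variables with success probabilities q_{11}, q_{12}, such that Y_{11}, Y_{12}, Y_2, …, Y_N are mutually independent, and let w_{11}, w_{12} > 0 satisfy w_{11} + w_{12} = w_1. If q_1 ≤ q_{11}·q_{12}, then for every t > 0, P(∑_{i=1}^N w_i Y_i ≥ t) ≤ P(w_{11}Y_{11} + w_{12}Y_{12} + ∑_{i=2}^N w_i Y_i ≥ t). That is, splitting a bin into parts whose success probabilities multiply to at least the original success probability cannot decrease the upper tail probability of the weighted sum. -/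

import Mathlib

open MeasureTheory ProbabilityTheory

/-- Splitting a bin cannot decrease the upper tail probability of the weighted sum.
`Y 0, …, Y N` are independent Bernoulli variables with positive weights `w`;
the bin `w 0` is split as `w11 + w12 = w 0` with Bernoulli variables `Y11, Y12`
such that `Y11, Y12, Y 1, …, Y N` (the family `Z`) are mutually independent.
If `P(Y 0 = 1) ≤ P(Y11 = 1)·P(Y12 = 1)`, then for every `t > 0`,
`P(∑ w i Y i ≥ t) ≤ P(w11 Y11 + w12 Y12 + ∑_{i≥1} w i Y i ≥ t)`. -/
theorem splitting_increases_upper_tail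
    {Ω : Type*} [MeasurableSpace Ω] (μ : Measure Ω) [IsProbabilityMeasure μ]
    (N : ℕ)
    (Y : Fin (N + 1) → Ω → ℝ) (Y11 Y12 : Ω → ℝ)
    (w : Fin (N + 1) → ℝ) (w11 w12 : ℝ)
    (hw : ∀ i, 0 < w i) (hw11 : 0 < w11) (hw12 : 0 < w12)
    (hsplit : w11 + w12 = w 0)
    (hYB : ∀ i ω, Y i ω = 0 ∨ Y i ω = 1)
    (hY11B : ∀ ω, Y11 ω = 0 ∨ Y11 ω = 1) (hY12B : ∀ ω, Y12 ω = 0 ∨ Y12 ω = 1)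
    (hYm : ∀ i, Measurable (Y i)) (hY11m : Measurable Y11) (hY12m : Measurable Y12)
    (hindepY : iIndepFun Y μ)
    (Z : Fin (N + 2) → Ω → ℝ)
    (hZ0 : Z 0 = Y11) (hZ1 : Z 1 = Y12)
    (hZs : ∀ i : Fin N, Z i.succ.succ = Y i.succ)
    (hindepZ : iIndepFun Z μ)
    (hq : μ {ω | Y 0 ω = 1} ≤ μ {ω | Y11 ω = 1} * μ {ω | Y12 ω = 1}) :
    ∀ t : ℝ, 0 < t →
      μ {ω | t ≤ ∑ i, w i * Y i ω} ≤
        μ {ω | t ≤ w11 * Y11 ω + w12 * Y12 ω + ∑ i : Fin N, w i.succ * Y i.succ ω} := by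
  classical
  intro t ht
  set S : Ω → ℝ := fun ω => ∑ i : Fin N, w i.succ * Y i.succ ω with hSdef
  have hSm : Measurable S := Finset.measurable_sum _ fun i _ => (hYm i.succ).const_mul _
  set T : Set Ω := S ⁻¹' Set.Ici t with hTdef
  set B : Set Ω := S ⁻¹' Set.Ico (t - w 0) t with hBdef
  have hTm : MeasurableSet T := hSm measurableSet_Ici
  have hBm : MeasurableSet B := hSm measurableSet_Ico
  -- Independence of Y 0 and S
  have hI1 : IndepFun (Y 0) S μ := by
    have h := hindepY.indepFun_finset {0} ({0}ᶜ) disjoint_compl_right hYm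
    have hφ : Measurable (fun v : (({0} : Finset (Fin (N+1))) → ℝ) =>
        v ⟨0, Finset.mem_singleton_self 0⟩) := measurable_pi_apply _
    have hψ : Measurable (fun v : ((({0} : Finset (Fin (N+1)))ᶜ : Finset _) → ℝ) =>
        ∑ i : Fin N, w i.succ * v ⟨i.succ, by simp [Fin.succ_ne_zero]⟩) :=
      Finset.measurable_sum _ fun i _ => (measurable_pi_apply _).const_mul _
    exact h.comp hφ hψ
  -- measurability of Z
  have hZm : ∀ i, Measurable (Z i) := by
    intro i
    induction i using Fin.cases with
    | zero => rw [hZ0]; exact hY11m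
    | succ j =>
      induction j using Fin.cases with
      | zero => rw [Fin.succ_zero_eq_one, hZ1]; exact hY12m
      | succ k => rw [hZs k]; exact hYm k.succ
  have hmem : ∀ i : Fin N, i.succ.succ ∈ (({0, 1} : Finset (Fin (N+2)))ᶜ) := by
    intro i
    simp only [Finset.mem_compl, Finset.mem_insert, Finset.mem_singleton, not_or]
    refine ⟨Fin.succ_ne_zero _, ?_⟩
    intro h
    rw [← Fin.succ_zero_eq_one] at h
    exact Fin.succ_ne_zero i (Fin.succ_injective _ h)
  -- Independence of (Y11, Y12) and S
  have hI2 : IndepFun (fun ω => (Y11 ω, Y12 ω)) S μ := by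
    have h := hindepZ.indepFun_finset {0, 1} ({0, 1}ᶜ) disjoint_compl_right hZm
    have hφ : Measurable (fun v : (({0, 1} : Finset (Fin (N+2))) → ℝ) =>
        (v ⟨0, by simp⟩, v ⟨1, by simp⟩)) :=
      (measurable_pi_apply _).prodMk (measurable_pi_apply _)
    have hψ : Measurable (fun v : ((({0, 1} : Finset (Fin (N+2)))ᶜ : Finset _) → ℝ) =>
        ∑ i : Fin N, w i.succ * v ⟨i.succ.succ, hmem i⟩) :=
      Finset.measurable_sum _ fun i _ => (measurable_pi_apply _).const_mul _
    have h2 := h.comp hφ hψ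
    have e1 : ((fun v : (({0, 1} : Finset (Fin (N+2))) → ℝ) =>
        (v ⟨0, by simp⟩, v ⟨1, by simp⟩)) ∘ (fun a (i : ({0, 1} : Finset (Fin (N+2)))) => Z i a))
        = fun ω => (Y11 ω, Y12 ω) := by
      funext ω
      simp only [Function.comp_apply, hZ0, hZ1]
    have e2 : ((fun v : ((({0, 1} : Finset (Fin (N+2)))ᶜ : Finset _) → ℝ) =>
        ∑ i : Fin N, w i.succ * v ⟨i.succ.succ, hmem i⟩)
          ∘ (fun a (i : ((({0, 1} : Finset (Fin (N+2)))ᶜ : Finset _))) => Z i a)) = S := by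
      funext ω
      simp only [Function.comp_apply]
      refine Finset.sum_congr rfl fun i _ => ?_
      show w i.succ * Z i.succ.succ ω = _
      rw [hZs i]
    rwa [e1, e2] at h2
  -- Independence of Y11 and Y12
  have hI3 : IndepFun Y11 Y12 μ := by
    have h := hindepZ.indepFun (i := 0) (j := 1) (by simp)
    rwa [hZ0, hZ1] at h
  -- LHS event decomposition
  have hE : {ω | t ≤ ∑ i, w i * Y i ω} = T ∪ (Y 0 ⁻¹' {1} ∩ B) := by
    ext ω
    have hsum : ∑ i, w i * Y i ω = w 0 * Y 0 ω + S ω := by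
      rw [Fin.sum_univ_succ]
    simp only [Set.mem_setOf_eq, Set.mem_union, Set.mem_inter_iff, Set.mem_preimage,
      Set.mem_singleton_iff, hTdef, hBdef, Set.mem_Ici, Set.mem_Ico, hsum]
    rcases hYB 0 ω with h0 | h0 <;> rw [h0] <;>
      simp only [mul_zero, mul_one, zero_add, zero_ne_one, one_ne_zero, false_and, or_false,
        true_and]
    · constructor
      · intro h
        by_cases h' : t ≤ S ω
        · exact Or.inl h'
        · exact Or.inr ⟨by linarith, by linarith⟩
      · rintro (h | ⟨h1, h2⟩) <;> linarith [hw 0]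
  -- disjointness
  have hdisj : Disjoint T (Y 0 ⁻¹' {1} ∩ B) := by
    rw [Set.disjoint_left]
    rintro ω hω ⟨-, hB'⟩
    exact absurd hω (not_le.mpr hB'.2)
  have hdisj2 : Disjoint T ((fun ω => (Y11 ω, Y12 ω)) ⁻¹' ({1} ×ˢ {1}) ∩ B) := by
    rw [Set.disjoint_left]
    rintro ω hω ⟨-, hB'⟩
    exact absurd hω (not_le.mpr hB'.2)
  -- measure of LHS
  have hμE : μ {ω | t ≤ ∑ i, w i * Y i ω} = μ T + μ (Y 0 ⁻¹' {1}) * μ B := by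
    rw [hE, measure_union hdisj (((hYm 0) (measurableSet_singleton 1)).inter hBm),
      hI1.measure_inter_preimage_eq_mul {1} (Set.Ico (t - w 0) t)
        (measurableSet_singleton 1) measurableSet_Ico]
  -- measure of split event
  have hμA : μ ((fun ω => (Y11 ω, Y12 ω)) ⁻¹' ({1} ×ˢ {1}) ∩ B)
      = (μ (Y11 ⁻¹' {1}) * μ (Y12 ⁻¹' {1})) * μ B := by
    rw [hI2.measure_inter_preimage_eq_mul ({1} ×ˢ {1}) (Set.Ico (t - w 0) t)
      ((measurableSet_singleton 1).prod (measurableSet_singleton 1)) measurableSet_Ico]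
    congr 1
    have : (fun ω => (Y11 ω, Y12 ω)) ⁻¹' (({1} : Set ℝ) ×ˢ ({1} : Set ℝ))
        = Y11 ⁻¹' {1} ∩ Y12 ⁻¹' {1} := by
      ext ω; simp [Set.mem_prod]
    rw [this, hI3.measure_inter_preimage_eq_mul {1} {1}
      (measurableSet_singleton 1) (measurableSet_singleton 1)]
  -- inclusion for RHS event
  have hsub : T ∪ ((fun ω => (Y11 ω, Y12 ω)) ⁻¹' ({1} ×ˢ {1}) ∩ B)
      ⊆ {ω | t ≤ w11 * Y11 ω + w12 * Y12 ω + S ω} := by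
    rintro ω (hω | ⟨hA, hB'⟩)
    · have h1 : 0 ≤ Y11 ω := by rcases hY11B ω with h | h <;> rw [h] <;> norm_num
      have h2 : 0 ≤ Y12 ω := by rcases hY12B ω with h | h <;> rw [h] <;> norm_num
      have := hω
      simp only [hTdef, Set.mem_preimage, Set.mem_Ici] at this
      have m1 : 0 ≤ w11 * Y11 ω := mul_nonneg hw11.le h1
      have m2 : 0 ≤ w12 * Y12 ω := mul_nonneg hw12.le h2
      simp only [Set.mem_setOf_eq]
      linarith
    · simp only [Set.mem_preimage, Set.mem_prod, Set.mem_singleton_iff] at hA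
      simp only [hBdef, Set.mem_preimage, Set.mem_Ico] at hB'
      simp only [Set.mem_setOf_eq, hA.1, hA.2, mul_one]
      linarith
  -- put everything together
  have hq' : μ (Y 0 ⁻¹' {1}) ≤ μ (Y11 ⁻¹' {1}) * μ (Y12 ⁻¹' {1}) := hq
  calc μ {ω | t ≤ ∑ i, w i * Y i ω}
      = μ T + μ (Y 0 ⁻¹' {1}) * μ B := hμE
    _ ≤ μ T + (μ (Y11 ⁻¹' {1}) * μ (Y12 ⁻¹' {1})) * μ B :=
        add_le_add_right (mul_le_mul_left hq' _) _
    _ = μ T + μ ((fun ω => (Y11 ω, Y12 ω)) ⁻¹' ({1} ×ˢ {1}) ∩ B) := by rw [hμA]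
    _ = μ (T ∪ ((fun ω => (Y11 ω, Y12 ω)) ⁻¹' ({1} ×ˢ {1}) ∩ B)) :=
        (measure_union hdisj2
          (((hY11m.prodMk hY12m) ((measurableSet_singleton 1).prod
            (measurableSet_singleton 1))).inter hBm)).symm
    _ ≤ μ {ω | t ≤ w11 * Y11 ω + w12 * Y12 ω + S ω} := measure_mono hsub
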